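/- Fix ν > 0, ρ ∈ ℝ, and α > 0. For each n ≥ 1, let α_n > 0 satisfy α_n < Γ(ν + n/2)^{1/n}/(√π·e^ρ·Γ(ν)^{1/n}), and assume α_n/√n → α as n → ∞. Let X_n be a random vector in ℝⁿ with density proportional to K_n², where K_n(x) = e^{nρ}·(1 + |x/α_n|²)^{−(ν + n/2)} is the Cauchy kernel. Then lim_{n→∞} P(|X_n| ≤ √n·R) = 0 for every 0 < R < α, and = 1 for every R > α. -/

import Mathlib

set_option maxHeartbeats 1000000


open MeasureTheory Filter Real
open scoped ENNReal Topology

/-- The Cauchy kernel on `ℝⁿ` with parameters `ν > 0`, `α_n > 0` and intensity `e^{nρ}`: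
`K_n(x) = e^{nρ}·(1 + |x/α_n|²)^{−(ν + n/2)}`. -/
noncomputable def cauchyKernel (ν ρ αn : ℝ) (n : ℕ) (x : EuclideanSpace ℝ (Fin n)) : ℝ :=
  Real.exp (n * ρ) * (1 + ‖x‖ ^ 2 / αn ^ 2) ^ (-(ν + (n : ℝ) / 2))

namespace CRAux

open Set

noncomputable def phi (ν : ℝ) (n : ℕ) (s : ℝ) : ℝ :=
  s ^ (n - 1) * (1 + s ^ 2) ^ (-(2 * ν + (n : ℝ)))

lemma g_nonneg {s : ℝ} (hs : 0 ≤ s) : 0 ≤ s / (1 + s ^ 2) := by positivity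

lemma g_le_one {s : ℝ} (hs : 0 ≤ s) : s / (1 + s ^ 2) ≤ 1 := by
  rw [div_le_one (by positivity)]; nlinarith [sq_nonneg (1 - s)]

lemma g_pos {s : ℝ} (hs : 0 < s) : 0 < s / (1 + s ^ 2) := by positivity

lemma g_mono {s t : ℝ} (hs : 0 ≤ s) (hst : s ≤ t) (h : s * t ≤ 1) :
    s / (1 + s ^ 2) ≤ t / (1 + t ^ 2) := by
  rw [div_le_div_iff₀ (by positivity) (by positivity)]
  nlinarith [mul_nonneg (sub_nonneg.2 hst) (sub_nonneg.2 h)]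

lemma g_anti {s t : ℝ} (hs : 0 ≤ s) (hst : s ≤ t) (h : 1 ≤ s * t) :
    t / (1 + t ^ 2) ≤ s / (1 + s ^ 2) := by
  rw [div_le_div_iff₀ (by positivity) (by positivity)]
  nlinarith [mul_nonneg (sub_nonneg.2 hst) (sub_nonneg.2 h)]

lemma g_strict_mono {s t : ℝ} (hs : 0 ≤ s) (hst : s < t) (h : s * t < 1) :
    s / (1 + s ^ 2) < t / (1 + t ^ 2) := by
  rw [div_lt_div_iff₀ (by positivity) (by positivity)]
  nlinarith [mul_pos (sub_pos.2 hst) (sub_pos.2 h)]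

lemma g_strict_anti {s t : ℝ} (hs : 0 ≤ s) (hst : s < t) (h : 1 < s * t) :
    t / (1 + t ^ 2) < s / (1 + s ^ 2) := by
  rw [div_lt_div_iff₀ (by positivity) (by positivity)]
  nlinarith [mul_pos (sub_pos.2 hst) (sub_pos.2 h)]

lemma phi_cont (ν : ℝ) (n : ℕ) : Continuous (phi ν n) := by
  unfold phi
  exact (continuous_pow _).mul
    ((continuous_const.add (continuous_pow 2)).rpow_const (fun x => Or.inl (ne_of_gt (by positivity : (0:ℝ) < 1 + x ^ 2))))

lemma phi_nonneg (ν : ℝ) (n : ℕ) {s : ℝ} (hs : 0 ≤ s) : 0 ≤ phi ν n s := by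
  unfold phi; positivity

lemma phi_eq {ν : ℝ} {n : ℕ} (hn : 1 ≤ n) {s : ℝ} (hs : 0 < s) :
    phi ν n s = (s / (1 + s ^ 2)) ^ (n - 1) * (1 + s ^ 2) ^ (-(2 * ν + 1)) := by
  have h1 : (0 : ℝ) < 1 + s ^ 2 := by positivity
  have hcast : ((n - 1 : ℕ) : ℝ) = (n : ℝ) - 1 := by
    rw [Nat.cast_sub hn, Nat.cast_one]
  have hexp : (-(2 * ν + (n : ℝ))) = (-((n - 1 : ℕ) : ℝ)) + (-(2 * ν + 1)) := by
    rw [hcast]; ring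
  rw [phi, hexp, Real.rpow_add h1, Real.rpow_neg h1.le, Real.rpow_natCast, div_pow,
    div_eq_mul_inv]
  ring

variable {ν : ℝ} {n : ℕ}

lemma rpow_le_inv (hν : 0 < ν) (s : ℝ) : (1 + s ^ 2) ^ (-(2 * ν + 1)) ≤ (1 + s ^ 2)⁻¹ := by
  rw [← Real.rpow_neg_one]
  exact Real.rpow_le_rpow_of_exponent_le (by nlinarith [sq_nonneg s]) (by linarith)

lemma rpow_le_one' (hν : 0 < ν) (s : ℝ) : (1 + s ^ 2) ^ (-(2 * ν + 1)) ≤ 1 :=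
  Real.rpow_le_one_of_one_le_of_nonpos (by nlinarith [sq_nonneg s]) (by linarith)

lemma integrableOn_phi (hν : 0 < ν) (hn : 1 ≤ n) : IntegrableOn (phi ν n) (Ioi 0) := by
  apply Integrable.mono' integrable_inv_one_add_sq.integrableOn
    (phi_cont ν n).aestronglyMeasurable.restrict
  filter_upwards [ae_restrict_mem measurableSet_Ioi] with s (hs : 0 < s)
  rw [Real.norm_eq_abs, abs_of_nonneg (phi_nonneg ν n hs.le), phi_eq hn hs]
  calc (s / (1 + s ^ 2)) ^ (n - 1) * (1 + s ^ 2) ^ (-(2 * ν + 1))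
      ≤ 1 * (1 + s ^ 2)⁻¹ := by
        apply mul_le_mul (pow_le_one₀ (g_nonneg hs.le) (g_le_one hs.le)) (rpow_le_inv hν s)
          (by positivity) one_pos.le
    _ = (1 + s ^ 2)⁻¹ := one_mul _

lemma I_nonneg (ν : ℝ) (n : ℕ) (t : ℝ) : 0 ≤ ∫ s in Ioc 0 t, phi ν n s :=
  setIntegral_nonneg measurableSet_Ioc fun s hs => phi_nonneg ν n hs.1.le

lemma T_nonneg (ν : ℝ) (n : ℕ) {t : ℝ} (ht : 0 ≤ t) : 0 ≤ ∫ s in Ioi t, phi ν n s :=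
  setIntegral_nonneg measurableSet_Ioi fun s hs => phi_nonneg ν n (ht.trans (le_of_lt hs))

lemma I_le (hν : 0 < ν) (hn : 1 ≤ n) {t : ℝ} (ht0 : 0 < t) (ht1 : t ≤ 1) :
    ∫ s in Ioc 0 t, phi ν n s ≤ t * (t / (1 + t ^ 2)) ^ (n - 1) := by
  have hb : ∀ s ∈ Ioc (0:ℝ) t, phi ν n s ≤ (t / (1 + t ^ 2)) ^ (n - 1) := by
    intro s hs
    rw [phi_eq hn hs.1]
    calc (s / (1 + s ^ 2)) ^ (n - 1) * (1 + s ^ 2) ^ (-(2 * ν + 1))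
        ≤ (t / (1 + t ^ 2)) ^ (n - 1) * 1 := by
          apply mul_le_mul _ (rpow_le_one' hν s) (by positivity)
            (pow_nonneg (g_nonneg (hs.1.le.trans hs.2)) _)
          exact pow_le_pow_left₀ (g_nonneg hs.1.le)
            (g_mono hs.1.le hs.2 (by nlinarith [hs.1.le, hs.2])) _
      _ = (t / (1 + t ^ 2)) ^ (n - 1) := mul_one _
  calc ∫ s in Ioc 0 t, phi ν n s
      ≤ ∫ _ in Ioc (0:ℝ) t, (t / (1 + t ^ 2)) ^ (n - 1) := by
        apply setIntegral_mono_on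
          (((phi_cont ν n).integrableOn_Ioc)) (integrableOn_const (by
            simp [Real.volume_Ioc])) measurableSet_Ioc hb
    _ = t * (t / (1 + t ^ 2)) ^ (n - 1) := by
        rw [setIntegral_const, Real.volume_real_Ioc_of_le (by linarith), smul_eq_mul]
        ring

lemma phi_ge_on (hν : 0 < ν) (hn : 1 ≤ n) {u v s : ℝ} (hu : 0 < u) (hs : s ∈ Icc u v) :
    (min (u / (1 + u ^ 2)) (v / (1 + v ^ 2))) ^ (n - 1) * (1 + v ^ 2) ^ (-(2 * ν + 1))
      ≤ phi ν n s := by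
  have hs0 : 0 < s := hu.trans_le hs.1
  have hv0 : 0 < v := hs0.trans_le hs.2
  rw [phi_eq hn hs0]
  have hmin : 0 ≤ min (u / (1 + u ^ 2)) (v / (1 + v ^ 2)) :=
    le_min (g_nonneg hu.le) (g_nonneg hv0.le)
  have hg : min (u / (1 + u ^ 2)) (v / (1 + v ^ 2)) ≤ s / (1 + s ^ 2) := by
    rcases le_total s 1 with h | h
    · exact (min_le_left _ _).trans (g_mono hu.le hs.1 (by nlinarith [hs.1, hu.le]))
    · exact (min_le_right _ _).trans (g_anti hs0.le hs.2 (by nlinarith [hs.2]))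
  apply mul_le_mul (pow_le_pow_left₀ hmin hg _) _ (by positivity)
    (pow_nonneg (g_nonneg hs0.le) _)
  exact Real.rpow_le_rpow_of_nonpos (by positivity)
    (by nlinarith [pow_le_pow_left₀ hs0.le hs.2 2]) (by linarith)

lemma J_ge (hν : 0 < ν) (hn : 1 ≤ n) {u v : ℝ} (hu : 0 < u) (huv : u ≤ v) :
    (v - u) * ((min (u / (1 + u ^ 2)) (v / (1 + v ^ 2))) ^ (n - 1)
        * (1 + v ^ 2) ^ (-(2 * ν + 1)))
      ≤ ∫ s in Ioi 0, phi ν n s := by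
  have hsub : Ioc u v ⊆ Ioi (0:ℝ) := fun s hs => hu.trans hs.1
  calc (v - u) * ((min (u / (1 + u ^ 2)) (v / (1 + v ^ 2))) ^ (n - 1)
        * (1 + v ^ 2) ^ (-(2 * ν + 1)))
      = ∫ _ in Ioc u v, ((min (u / (1 + u ^ 2)) (v / (1 + v ^ 2))) ^ (n - 1)
          * (1 + v ^ 2) ^ (-(2 * ν + 1))) := by
        rw [setIntegral_const, Real.volume_real_Ioc_of_le (by linarith), smul_eq_mul]
    _ ≤ ∫ s in Ioc u v, phi ν n s := by
        apply setIntegral_mono_on (integrableOn_const (by simp [Real.volume_Ioc]))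
          ((integrableOn_phi hν hn).mono_set hsub) measurableSet_Ioc
          (fun s hs => phi_ge_on hν hn hu ⟨hs.1.le, hs.2⟩)
    _ ≤ ∫ s in Ioi 0, phi ν n s := by
        apply setIntegral_mono_set (integrableOn_phi hν hn)
          ((ae_restrict_mem measurableSet_Ioi).mono fun s hs => phi_nonneg ν n (le_of_lt hs))
          (HasSubset.Subset.eventuallyLE hsub)

lemma T_le (hν : 0 < ν) (hn : 1 ≤ n) {t : ℝ} (ht : 1 ≤ t) :
    ∫ s in Ioi t, phi ν n s ≤ (t / (1 + t ^ 2)) ^ (n - 1) * π := by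
  have ht0 : 0 < t := lt_of_lt_of_le one_pos ht
  have hb : ∀ s ∈ Ioi t, phi ν n s ≤ (t / (1 + t ^ 2)) ^ (n - 1) * (1 + s ^ 2)⁻¹ := by
    intro s (hs : t < s)
    have hs0 : 0 < s := ht0.trans hs
    rw [phi_eq hn hs0]
    apply mul_le_mul _ (rpow_le_inv hν s) (by positivity)
      (pow_nonneg (g_nonneg ht0.le) _)
    exact pow_le_pow_left₀ (g_nonneg hs0.le) (g_anti ht0.le hs.le (by nlinarith)) _
  calc ∫ s in Ioi t, phi ν n s
      ≤ ∫ s in Ioi t, (t / (1 + t ^ 2)) ^ (n - 1) * (1 + s ^ 2)⁻¹ := by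
        apply setIntegral_mono_on ((integrableOn_phi hν hn).mono_set
            (Ioi_subset_Ioi ht0.le))
          ((integrable_inv_one_add_sq.integrableOn).const_mul _) measurableSet_Ioi hb
    _ = (t / (1 + t ^ 2)) ^ (n - 1) * ∫ s in Ioi t, (1 + s ^ 2)⁻¹ := by
        rw [MeasureTheory.integral_const_mul]
    _ ≤ (t / (1 + t ^ 2)) ^ (n - 1) * π := by
        apply mul_le_mul_of_nonneg_left _ (pow_nonneg (g_nonneg ht0.le) _)
        rw [← integral_univ_inv_one_add_sq]
        exact setIntegral_le_integral integrable_inv_one_add_sq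
          (Eventually.of_forall fun s => by positivity)

lemma J_split (hν : 0 < ν) (hn : 1 ≤ n) {t : ℝ} (ht : 0 < t) :
    ∫ s in Ioi 0, phi ν n s
      = (∫ s in Ioc 0 t, phi ν n s) + ∫ s in Ioi t, phi ν n s := by
  rw [← setIntegral_union (Ioc_disjoint_Ioi le_rfl) measurableSet_Ioi
    ((integrableOn_phi hν hn).mono_set Ioc_subset_Ioi_self)
    ((integrableOn_phi hν hn).mono_set (Ioi_subset_Ioi ht.le)),
    Ioc_union_Ioi_eq_Ioi ht.le]

lemma ratio_helper (x y b d : ℝ) (k : ℕ) :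
    (x * b ^ k) / (y * d ^ k) = (x / y) * (b / d) ^ k := by
  rw [div_pow, div_mul_div_comm]

lemma ratio_helper2 (x y b d : ℝ) (k : ℕ) (hy : y ≠ 0) (hd : d ≠ 0) :
    (x / y) * (b / d) ^ k * (y * d ^ k) = b ^ k * x := by
  rw [div_pow]
  field_simp

lemma red (ν ρ : ℝ) {n : ℕ} (hn : 1 ≤ n) {aa c : ℝ} (ha : 0 < aa) :
    (∫ x in Metric.closedBall (0 : EuclideanSpace ℝ (Fin n)) c, (cauchyKernel ν ρ aa n x) ^ 2)
        / (∫ x, (cauchyKernel ν ρ aa n x) ^ 2)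
      = (∫ s in Ioc 0 (c / aa), phi ν n s) / (∫ s in Ioi 0, phi ν n s) := by
  haveI : Nontrivial (EuclideanSpace ℝ (Fin n)) :=
    Module.nontrivial_of_finrank_pos (R := ℝ) (by rw [finrank_euclideanSpace_fin]; omega)
  set E := EuclideanSpace ℝ (Fin n)
  set f : ℝ → ℝ := fun r => (1 + r ^ 2 / aa ^ 2) ^ (-(2 * ν + (n : ℝ))) with hf
  have hker : ∀ x : E, (cauchyKernel ν ρ aa n x) ^ 2 = Real.exp (2 * n * ρ) * f ‖x‖ := by
    intro x
    have h1 : (0 : ℝ) < 1 + ‖x‖ ^ 2 / aa ^ 2 := by positivity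
    rw [cauchyKernel, mul_pow, sq (Real.exp _), ← Real.exp_add,
      sq ((1 + ‖x‖ ^ 2 / aa ^ 2) ^ _), ← Real.rpow_add h1,
      show (n : ℝ) * ρ + n * ρ = 2 * n * ρ by ring,
      show -(ν + (n : ℝ) / 2) + -(ν + (n : ℝ) / 2) = -(2 * ν + (n : ℝ)) by ring]
  set h : ℝ → ℝ := fun y => y ^ (n - 1) * f y with hh
  have hsub : ∀ F : ℝ → ℝ, ∫ y in Ioi (0 : ℝ), F y = aa • ∫ x in Ioi (0 : ℝ), F (aa * x) := by
    intro F
    rw [integral_comp_mul_left_Ioi F 0 ha, mul_zero, smul_smul, mul_inv_cancel₀ ha.ne',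
      one_smul]
  have hscale : ∀ x : ℝ, h (aa * x) = aa ^ (n - 1) * phi ν n x := by
    intro x
    have : (aa * x) ^ 2 / aa ^ 2 = x ^ 2 := by
      rw [mul_pow, mul_div_assoc]
      field_simp
    simp only [hh, hf, phi]
    rw [this, mul_pow]
    ring
  have hden : (∫ x : E, (cauchyKernel ν ρ aa n x) ^ 2)
      = Real.exp (2 * n * ρ) * ((n : ℝ) * ((volume (Metric.ball (0 : E) 1)).toReal *
        (aa * (aa ^ (n - 1) * ∫ s in Ioi 0, phi ν n s)))) := by
    simp_rw [hker]
    rw [MeasureTheory.integral_const_mul]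
    congr 1
    rw [integral_fun_norm_addHaar volume f, finrank_euclideanSpace_fin, nsmul_eq_mul,
      smul_eq_mul]
    congr 2
    have : ∀ y : ℝ, y ^ (n - 1) • f y = h y := fun y => by simp [hh, smul_eq_mul]
    simp_rw [this]
    rw [hsub h, smul_eq_mul]
    congr 1
    simp_rw [hscale]
    rw [MeasureTheory.integral_const_mul]
  have hnum : (∫ x in Metric.closedBall (0 : E) c, (cauchyKernel ν ρ aa n x) ^ 2)
      = Real.exp (2 * n * ρ) * ((n : ℝ) * ((volume (Metric.ball (0 : E) 1)).toReal *
        (aa * (aa ^ (n - 1) * ∫ s in Ioc 0 (c / aa), phi ν n s)))) := by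
    simp_rw [hker]
    rw [MeasureTheory.integral_const_mul]
    congr 1
    rw [← integral_indicator (measurableSet_closedBall)]
    have h1 : (Metric.closedBall (0 : E) c).indicator (fun x => f ‖x‖)
        = fun x : E => (Iic c).indicator f ‖x‖ := by
      funext x
      by_cases hx : ‖x‖ ≤ c
      · rw [Set.indicator_of_mem (by simpa [Metric.mem_closedBall, dist_zero_right] using hx),
          Set.indicator_of_mem (by simpa using hx)]
      · rw [Set.indicator_of_notMem (by simpa [Metric.mem_closedBall, dist_zero_right] using hx),
          Set.indicator_of_notMem (by simpa using hx)]
    rw [h1, integral_fun_norm_addHaar volume ((Iic c).indicator f),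
      finrank_euclideanSpace_fin, nsmul_eq_mul, smul_eq_mul]
    congr 2
    have h2 : ∀ y : ℝ, y ^ (n - 1) • (Iic c).indicator f y = (Iic c).indicator h y := by
      intro y
      by_cases hy : y ∈ Iic c <;> simp [hy, hh, smul_eq_mul]
    simp_rw [h2]
    rw [hsub ((Iic c).indicator h), smul_eq_mul]
    congr 1
    have h3 : ∀ x : ℝ, (Iic c).indicator h (aa * x)
        = aa ^ (n - 1) * (Iic (c / aa)).indicator (phi ν n) x := by
      intro x
      by_cases hx : x ≤ c / aa
      · rw [Set.indicator_of_mem (by rwa [mem_Iic, ← le_div_iff₀' ha]),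
          Set.indicator_of_mem (by simpa using hx), hscale]
      · rw [Set.indicator_of_notMem (by rw [mem_Iic, ← le_div_iff₀' ha]; exact hx),
          Set.indicator_of_notMem (by simpa using hx), mul_zero]
    simp_rw [h3]
    rw [MeasureTheory.integral_const_mul]
    congr 1
    rw [integral_indicator measurableSet_Iic, Measure.restrict_restrict measurableSet_Iic,
      Set.inter_comm, Set.Ioi_inter_Iic]
  rw [hnum, hden]
  have hV : 0 < (volume (Metric.ball (0 : E) 1)).toReal :=
    ENNReal.toReal_pos (Metric.measure_ball_pos volume _ one_pos).ne' measure_ball_lt_top.ne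
  have hD : Real.exp (2 * n * ρ) * ((n : ℝ) * ((volume (Metric.ball (0 : E) 1)).toReal *
      (aa * aa ^ (n - 1)))) ≠ 0 := by
    have hn0 : (0 : ℝ) < n := by exact_mod_cast hn
    positivity
  calc _ = (Real.exp (2 * n * ρ) * ((n : ℝ) * ((volume (Metric.ball (0 : E) 1)).toReal *
        (aa * aa ^ (n - 1)))) * ∫ s in Ioc 0 (c / aa), phi ν n s)
      / (Real.exp (2 * n * ρ) * ((n : ℝ) * ((volume (Metric.ball (0 : E) 1)).toReal *
        (aa * aa ^ (n - 1)))) * ∫ s in Ioi 0, phi ν n s) := by ring_nf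
    _ = _ := mul_div_mul_left _ _ hD

end CRAux

open Set CRAux

/-- For the Cauchy models with `α_n/√n → α` (and the existence bound),
`P(|X_n| ≤ √n·R) → 0` for every `0 < R < α` and `→ 1` for every `R > α`. -/
theorem cauchy_reach_of_repulsion (ν ρ α : ℝ) (hν : 0 < ν) (hα : 0 < α)
    (a : ℕ → ℝ) (ha_pos : ∀ n : ℕ, 1 ≤ n → 0 < a n)
    (ha_bnd : ∀ n : ℕ, 1 ≤ n →
      a n < Real.Gamma (ν + (n : ℝ) / 2) ^ ((1 : ℝ) / n) /
        (Real.sqrt π * Real.exp ρ * Real.Gamma ν ^ ((1 : ℝ) / n)))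
    (ha_lim : Tendsto (fun n : ℕ => a n / Real.sqrt n) atTop (nhds α))
    (Ω : ℕ → Type*) [∀ n, MeasurableSpace (Ω n)]
    (μ : ∀ n, Measure (Ω n)) (hμ : ∀ n, IsProbabilityMeasure (μ n))
    (X : ∀ n, Ω n → EuclideanSpace ℝ (Fin n))
    (hX : ∀ n, Measurable (X n))
    (hdens : ∀ n : ℕ, 1 ≤ n → ∀ B : Set (EuclideanSpace ℝ (Fin n)), MeasurableSet B →
      ((μ n) ((X n) ⁻¹' B)).toReal =
        (∫ x in B, (cauchyKernel ν ρ (a n) n x) ^ 2) /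
          ∫ x, (cauchyKernel ν ρ (a n) n x) ^ 2) :
    (∀ R : ℝ, 0 < R → R < α →
      Tendsto (fun n : ℕ => ((μ n) {ω | ‖X n ω‖ ≤ Real.sqrt n * R}).toReal)
        atTop (nhds 0)) ∧
    (∀ R : ℝ, α < R →
      Tendsto (fun n : ℕ => ((μ n) {ω | ‖X n ω‖ ≤ Real.sqrt n * R}).toReal)
        atTop (nhds 1)) := by
  -- the probability as a ratio of one-dimensional integrals
  have key : ∀ R : ℝ, ∀ n : ℕ, 1 ≤ n →
      ((μ n) {ω | ‖X n ω‖ ≤ Real.sqrt n * R}).toReal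
        = (∫ s in Ioc 0 (Real.sqrt n * R / a n), phi ν n s) / ∫ s in Ioi 0, phi ν n s := by
    intro R n hn
    have hset : {ω | ‖X n ω‖ ≤ Real.sqrt n * R}
        = X n ⁻¹' Metric.closedBall 0 (Real.sqrt n * R) := by
      ext ω; simp [Metric.mem_closedBall, dist_zero_right]
    rw [hset, hdens n hn _ measurableSet_closedBall, red ν ρ hn (ha_pos n hn)]
  -- the rescaled thresholds converge to R / α
  have htend : ∀ R : ℝ, Tendsto (fun n : ℕ => Real.sqrt n * R / a n) atTop (nhds (R / α)) := by
    intro R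
    have h1 : ∀ᶠ n : ℕ in atTop, R / (a n / Real.sqrt n) = Real.sqrt n * R / a n := by
      filter_upwards [eventually_ge_atTop 1] with n hn
      have h2 : (0:ℝ) < Real.sqrt n := Real.sqrt_pos.2 (by exact_mod_cast hn)
      have h3 : a n ≠ 0 := (ha_pos n hn).ne'
      field_simp
    exact Tendsto.congr' h1 (tendsto_const_nhds.div ha_lim hα.ne')
  constructor
  · -- R < α
    intro R hR0 hRα
    have hc0 : 0 < R / α := div_pos hR0 hα
    have hc1 : R / α < 1 := (div_lt_one hα).2 hRα
    set c := R / α with hcdef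
    set t1 := (c + 1) / 2 with ht1def
    set t2 := (t1 + 1) / 2 with ht2def
    have hct1 : c < t1 := by rw [ht1def]; linarith
    have ht11 : t1 < 1 := by rw [ht1def]; linarith
    have ht1pos : 0 < t1 := by rw [ht1def]; linarith
    have ht12 : t1 < t2 := by rw [ht2def]; linarith
    have ht21 : t2 < 1 := by rw [ht2def]; linarith
    have ht2pos : 0 < t2 := lt_trans ht1pos ht12
    set g1 := t1 / (1 + t1 ^ 2) with hg1def
    set g2 := t2 / (1 + t2 ^ 2) with hg2def
    have hg2 : 0 < g2 := g_pos ht2pos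
    have hr : g1 / g2 < 1 := (div_lt_one hg2).2 (g_strict_mono ht1pos.le ht12 (by nlinarith))
    have hr0 : 0 ≤ g1 / g2 := div_nonneg (g_nonneg ht1pos.le) hg2.le
    set κ := (1 + (1:ℝ) ^ 2) ^ (-(2 * ν + 1)) with hκdef
    have hκ : 0 < κ := Real.rpow_pos_of_pos (by norm_num) _
    set D := (1 - t2) * κ with hDdef
    have hD : 0 < D := mul_pos (by linarith) hκ
    set C := t1 / D with hCdef
    have hub : ∀ᶠ n : ℕ in atTop,
        ((μ n) {ω | ‖X n ω‖ ≤ Real.sqrt n * R}).toReal ≤ C * (g1 / g2) ^ (n - 1) := by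
      filter_upwards [eventually_ge_atTop 1, (htend R).eventually_le_const hct1]
        with n hn hle
      rw [key R n hn]
      set tn := Real.sqrt n * R / a n
      have hI : (∫ s in Ioc 0 tn, phi ν n s) ≤ t1 * g1 ^ (n - 1) := by
        refine le_trans ?_ (I_le hν hn ht1pos ht11.le)
        apply setIntegral_mono_set ((integrableOn_phi hν hn).mono_set Ioc_subset_Ioi_self)
          ((ae_restrict_mem measurableSet_Ioc).mono fun s hs => phi_nonneg ν n hs.1.le)
          (HasSubset.Subset.eventuallyLE (Ioc_subset_Ioc_right hle))
      have hJ : D * g2 ^ (n - 1) ≤ ∫ s in Ioi 0, phi ν n s := by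
        have := J_ge hν hn ht2pos ht21.le
        have hmin : min (t2 / (1 + t2 ^ 2)) ((1:ℝ) / (1 + (1:ℝ) ^ 2)) = g2 := by
          rw [hg2def]
          exact min_eq_left (g_mono ht2pos.le ht21.le (by nlinarith))
        rw [hmin] at this
        calc D * g2 ^ (n - 1) = (1 - t2) * (g2 ^ (n - 1) * κ) := by rw [hDdef]; ring
          _ ≤ _ := this
      have hJ0 : 0 < ∫ s in Ioi 0, phi ν n s := lt_of_lt_of_le (by positivity) hJ
      calc (∫ s in Ioc 0 tn, phi ν n s) / ∫ s in Ioi 0, phi ν n s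
          ≤ (t1 * g1 ^ (n - 1)) / (D * g2 ^ (n - 1)) :=
            div_le_div₀ (by positivity) hI (by positivity) hJ
        _ = C * (g1 / g2) ^ (n - 1) := by
            rw [hCdef]; exact ratio_helper t1 D g1 g2 (n - 1)
    have hCr : Tendsto (fun n : ℕ => C * (g1 / g2) ^ (n - 1)) atTop (nhds 0) := by
      have := ((tendsto_pow_atTop_nhds_zero_of_lt_one hr0 hr).comp
        (tendsto_sub_atTop_nat 1)).const_mul C
      simpa using this
    exact tendsto_of_tendsto_of_tendsto_of_le_of_le' tendsto_const_nhds hCr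
      (Eventually.of_forall fun n => ENNReal.toReal_nonneg) hub
  · -- R > α
    intro R hαR
    have hR0 : 0 < R := hα.trans hαR
    have hc1 : 1 < R / α := (one_lt_div hα).2 hαR
    set c := R / α with hcdef
    set t1 := (c + 1) / 2 with ht1def
    set v := (t1 + 1) / 2 with hvdef
    have ht1c : t1 < c := by rw [ht1def]; linarith
    have ht11 : 1 < t1 := by rw [ht1def]; linarith
    have hv1 : 1 < v := by rw [hvdef]; linarith
    have hvt1 : v < t1 := by rw [hvdef]; linarith
    have ht1pos : 0 < t1 := by linarith
    have hvpos : 0 < v := by linarith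
    set g1 := t1 / (1 + t1 ^ 2) with hg1def
    set gv := v / (1 + v ^ 2) with hgvdef
    have hgv : 0 < gv := g_pos hvpos
    have hr : g1 / gv < 1 := (div_lt_one hgv).2 (g_strict_anti hvpos.le hvt1 (by nlinarith))
    have hr0 : 0 ≤ g1 / gv := div_nonneg (g_nonneg ht1pos.le) hgv.le
    set κ := (1 + v ^ 2) ^ (-(2 * ν + 1)) with hκdef
    have hκ : 0 < κ := Real.rpow_pos_of_pos (by positivity) _
    set D := (v - 1) * κ with hDdef
    have hD : 0 < D := mul_pos (by linarith) hκ
    set C := π / D with hCdef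
    -- the tail ratio, eventually
    have hQ : ∀ n : ℕ, 1 ≤ n → D * gv ^ (n - 1) ≤ ∫ s in Ioi 0, phi ν n s := by
      intro n hn
      have := J_ge hν hn one_pos hv1.le
      have hmin : min ((1:ℝ) / (1 + (1:ℝ) ^ 2)) (v / (1 + v ^ 2)) = gv := by
        rw [hgvdef]
        exact min_eq_right (g_anti zero_le_one hv1.le (by nlinarith))
      rw [hmin] at this
      calc D * gv ^ (n - 1) = (v - 1) * (gv ^ (n - 1) * κ) := by rw [hDdef]; ring
        _ ≤ _ := this
    have hJ0 : ∀ n : ℕ, 1 ≤ n → 0 < ∫ s in Ioi 0, phi ν n s := fun n hn =>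
      lt_of_lt_of_le (by positivity) (hQ n hn)
    have hev : ∀ᶠ n : ℕ in atTop,
        1 - C * (g1 / gv) ^ (n - 1) ≤ ((μ n) {ω | ‖X n ω‖ ≤ Real.sqrt n * R}).toReal ∧
        ((μ n) {ω | ‖X n ω‖ ≤ Real.sqrt n * R}).toReal ≤ 1 := by
      filter_upwards [eventually_ge_atTop 1, (htend R).eventually_const_le ht1c] with n hn hge
      rw [key R n hn]
      set tn := Real.sqrt n * R / a n with htndef
      have htn1 : t1 ≤ tn := hge
      have htn0 : 0 < tn := lt_of_lt_of_le ht1pos htn1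
      have hsplit := J_split hν hn (t := tn) htn0
      have hJpos := hJ0 n hn
      have hTnn : 0 ≤ ∫ s in Ioi tn, phi ν n s := T_nonneg ν n htn0.le
      have hInn : 0 ≤ ∫ s in Ioc 0 tn, phi ν n s := I_nonneg ν n tn
      constructor
      · -- lower bound
        have hT : (∫ s in Ioi tn, phi ν n s) ≤ C * (g1 / gv) ^ (n - 1) *
            ∫ s in Ioi 0, phi ν n s := by
          have hT1 : (∫ s in Ioi tn, phi ν n s) ≤ ∫ s in Ioi t1, phi ν n s := by
            apply setIntegral_mono_set ((integrableOn_phi hν hn).mono_set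
                (Ioi_subset_Ioi ht1pos.le))
              ((ae_restrict_mem measurableSet_Ioi).mono fun s hs =>
                phi_nonneg ν n (ht1pos.le.trans (le_of_lt hs)))
              (HasSubset.Subset.eventuallyLE (Ioi_subset_Ioi htn1))
          have hT2 : (∫ s in Ioi t1, phi ν n s) ≤ g1 ^ (n - 1) * π := T_le hν hn ht11.le
          have hT3 : g1 ^ (n - 1) * π ≤ C * (g1 / gv) ^ (n - 1) * (D * gv ^ (n - 1)) := by
            rw [hCdef]
            exact le_of_eq (ratio_helper2 π D g1 gv (n - 1) hD.ne' hgv.ne').symm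
          calc (∫ s in Ioi tn, phi ν n s) ≤ g1 ^ (n - 1) * π := hT1.trans hT2
            _ ≤ C * (g1 / gv) ^ (n - 1) * (D * gv ^ (n - 1)) := hT3
            _ ≤ C * (g1 / gv) ^ (n - 1) * ∫ s in Ioi 0, phi ν n s := by
                apply mul_le_mul_of_nonneg_left (hQ n hn) (by positivity)
        rw [le_div_iff₀ hJpos, hsplit]
        nlinarith [hT]
      · -- upper bound by 1
        rw [div_le_one hJpos, hsplit]
        linarith
    have hCr : Tendsto (fun n : ℕ => 1 - C * (g1 / gv) ^ (n - 1)) atTop (nhds 1) := by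
      have h1 : Tendsto (fun n : ℕ => C * (g1 / gv) ^ (n - 1)) atTop (nhds 0) := by
        have := ((tendsto_pow_atTop_nhds_zero_of_lt_one hr0 hr).comp
          (tendsto_sub_atTop_nat 1)).const_mul C
        simpa using this
      simpa using tendsto_const_nhds.sub h1
    exact tendsto_of_tendsto_of_tendsto_of_le_of_le' hCr tendsto_const_nhds
      (hev.mono fun n h => h.1) (hev.mono fun n h => h.2)
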